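/- Suppose f : [0,∞) → ℝ is continuous, f(x) ~ a x^α as x → ∞ (i.e. lim_{x→∞} x^(−α) f(x) = a ≠ 0) with α > −1. Then ℱ[f](x) := ∫_0^{π/2} f(x sin θ)dθ satisfies lim_{x→∞} x^(−α) ℱ[f](x) = a·𝒢(α), where 𝒢(α) := (√π/2)·Γ((1+α)/2)/Γ(1+α/2). -/

import Mathlib

open MeasureTheory Filter Real Set

lemma sin_rpow_integrable {α : ℝ} (hα : -1 < α) :
    IntegrableOn (fun θ : ℝ => Real.sin θ ^ α) (Set.Ioc 0 (π/2)) := by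
  have hmeas : AEStronglyMeasurable (fun θ : ℝ => Real.sin θ ^ α)
      (volume.restrict (Set.Ioc 0 (π/2))) :=
    by
      refine ContinuousOn.aestronglyMeasurable ?_ measurableSet_Ioc
      intro θ hθ
      have hs0 : 0 < Real.sin θ := Real.sin_pos_of_pos_of_lt_pi hθ.1
        (lt_of_le_of_lt hθ.2 (by linarith [Real.pi_pos]))
      exact ((Real.continuousAt_rpow_const _ _ (Or.inl hs0.ne')).comp
        Real.continuous_sin.continuousAt).continuousWithinAt
  have hbound : IntegrableOn (fun θ : ℝ => 1 + (2/π)^α * θ ^ α) (Set.Ioc 0 (π/2)) := by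
    apply Integrable.add (integrable_const _)
    apply Integrable.const_mul
    have := intervalIntegral.intervalIntegrable_rpow' (a := 0) (b := π/2) hα
    rwa [intervalIntegrable_iff_integrableOn_Ioc_of_le (by positivity)] at this
  refine hbound.mono' hmeas ?_
  filter_upwards [ae_restrict_mem measurableSet_Ioc] with θ hθ
  have hθ0 : 0 < θ := hθ.1
  have hθ2 : θ ≤ π/2 := hθ.2
  have hs0 : 0 < Real.sin θ :=
    Real.sin_pos_of_pos_of_lt_pi hθ0 (lt_of_le_of_lt hθ2 (by linarith [Real.pi_pos]))
  rw [Real.norm_eq_abs, abs_of_nonneg (Real.rpow_nonneg hs0.le _)]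
  rcases le_or_gt 0 α with h0 | h0
  · have h1 : Real.sin θ ^ α ≤ 1 := Real.rpow_le_one hs0.le (Real.sin_le_one θ) h0
    have h2 : 0 ≤ (2/π)^α * θ ^ α := by positivity
    linarith
  · have hls : 2/π * θ ≤ Real.sin θ := Real.mul_le_sin hθ0.le hθ2
    have h1 : Real.sin θ ^ α ≤ (2/π * θ) ^ α :=
      Real.rpow_le_rpow_of_nonpos (by positivity) hls h0.le
    rw [Real.mul_rpow (by positivity) hθ0.le] at h1
    linarith

lemma sin_sq_image : (fun θ : ℝ => Real.sin θ ^ 2) '' Set.Ioo 0 (π/2) = Set.Ioo 0 1 := by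
  ext t
  constructor
  · rintro ⟨θ, hθ, rfl⟩
    have hs0 : 0 < Real.sin θ :=
      Real.sin_pos_of_pos_of_lt_pi hθ.1 (hθ.2.trans_le (by linarith [Real.pi_pos]))
    have hs1 : Real.sin θ < 1 := by
      have := Real.strictMonoOn_sin
        (a := θ) (b := π/2)
        ⟨by linarith [hθ.1, Real.pi_pos], hθ.2.le⟩ ⟨by linarith [Real.pi_pos], le_refl _⟩ hθ.2
      simpa [Real.sin_pi_div_two] using this
    refine ⟨by positivity, by simp only; nlinarith⟩
  · rintro ⟨ht0, ht1⟩
    refine ⟨Real.arcsin (Real.sqrt t), ⟨?_, ?_⟩, ?_⟩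
    · exact Real.arcsin_pos.mpr (Real.sqrt_pos.mpr ht0)
    · refine Real.arcsin_lt_pi_div_two.mpr ?_
      rw [show (1:ℝ) = Real.sqrt 1 by simp]
      exact Real.sqrt_lt_sqrt ht0.le ht1
    · show Real.sin (Real.arcsin (Real.sqrt t)) ^ 2 = t
      rw [Real.sin_arcsin (by linarith [Real.sqrt_nonneg t]) (by
        rw [show (1:ℝ) = Real.sqrt 1 by simp]
        exact Real.sqrt_le_sqrt ht1.le)]
      exact Real.sq_sqrt ht0.le

lemma sin_sq_injOn : Set.InjOn (fun θ : ℝ => Real.sin θ ^ 2) (Set.Ioo 0 (π/2)) := by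
  intro x hx y hy h
  have hpi := Real.pi_pos
  have hsx : 0 < Real.sin x :=
    Real.sin_pos_of_pos_of_lt_pi hx.1 (hx.2.trans_le (by linarith))
  have hsy : 0 < Real.sin y :=
    Real.sin_pos_of_pos_of_lt_pi hy.1 (hy.2.trans_le (by linarith))
  simp only at h
  have hs : Real.sin x = Real.sin y := by nlinarith
  exact Real.injOn_sin ⟨by linarith [hx.1], hx.2.le⟩ ⟨by linarith [hy.1], hy.2.le⟩ hs


lemma beta_real {u v : ℝ} (hu : 0 < u) (hv : 0 < v) :
    Real.Gamma u * Real.Gamma v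
      = Real.Gamma (u + v) * ∫ x in (0:ℝ)..1, x ^ (u-1) * (1-x) ^ (v-1) := by
  have key : Complex.betaIntegral u v
      = ((∫ x in (0:ℝ)..1, x ^ (u-1) * (1-x) ^ (v-1) : ℝ) : ℂ) := by
    rw [Complex.betaIntegral, ← intervalIntegral.integral_ofReal]
    refine intervalIntegral.integral_congr fun x hx => ?_
    rw [Set.uIcc_of_le (by norm_num)] at hx
    have hx0 : (0:ℝ) ≤ x := hx.1
    have hx1 : (0:ℝ) ≤ 1 - x := by linarith [hx.2]
    push_cast
    rw [Complex.ofReal_cpow hx0, Complex.ofReal_cpow hx1]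
    push_cast
    ring
  have h := Complex.Gamma_mul_Gamma_eq_betaIntegral
    (s := (u:ℂ)) (t := (v:ℂ)) (by simpa using hu) (by simpa using hv)
  rw [key] at h
  rw [← Complex.ofReal_inj]
  push_cast
  rw [← Complex.Gamma_ofReal, ← Complex.Gamma_ofReal, ← Complex.Gamma_ofReal]
  push_cast
  exact h


lemma sin_rpow_integral {α : ℝ} (hα : -1 < α) :
    ∫ θ in (0:ℝ)..(π/2), Real.sin θ ^ α
      = Real.sqrt π / 2 * Real.Gamma ((1+α)/2) / Real.Gamma (1+α/2) := by
  have hpi := Real.pi_pos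
  set u : ℝ := (1+α)/2 with hu_def
  have hu : 0 < u := by rw [hu_def]; linarith
  have hderiv : ∀ θ ∈ Set.Ioo (0:ℝ) (π/2),
      HasDerivWithinAt (fun θ : ℝ => Real.sin θ ^ 2)
        (2 * Real.sin θ * Real.cos θ) (Set.Ioo 0 (π/2)) θ := by
    intro θ _
    have h : HasDerivWithinAt (fun θ : ℝ => Real.sin θ ^ 2)
        (((2:ℕ):ℝ) * Real.sin θ ^ (2-1) * Real.cos θ) (Set.Ioo (0:ℝ) (π/2)) θ :=
      ((Real.hasDerivAt_sin θ).pow 2).hasDerivWithinAt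
      (s := Set.Ioo (0:ℝ) (π/2))
    convert h using 1
    push_cast
    ring
  have hsub := integral_image_eq_integral_abs_deriv_smul measurableSet_Ioo hderiv sin_sq_injOn
      (fun x : ℝ => x ^ (u-1) * (1-x) ^ ((1:ℝ)/2-1))
  rw [sin_sq_image] at hsub
  have hcong : Set.EqOn
      (fun θ : ℝ => |2 * Real.sin θ * Real.cos θ| •
        ((Real.sin θ ^ 2) ^ (u-1) * (1 - Real.sin θ ^ 2) ^ ((1:ℝ)/2-1)))
      (fun θ : ℝ => 2 * Real.sin θ ^ α) (Set.Ioo 0 (π/2)) := by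
    intro θ hθ
    have hs0 : 0 < Real.sin θ :=
      Real.sin_pos_of_pos_of_lt_pi hθ.1 (hθ.2.trans_le (by linarith))
    have hc0 : 0 < Real.cos θ := Real.cos_pos_of_mem_Ioo ⟨by linarith [hθ.1], hθ.2⟩
    have e1 : (Real.sin θ ^ 2) ^ (u-1) = Real.sin θ ^ (α-1) := by
      rw [← Real.rpow_natCast (Real.sin θ) 2, ← Real.rpow_mul hs0.le,
        show ((2:ℕ):ℝ) * (u-1) = α-1 by rw [hu_def]; push_cast; ring]
    have e2 : (1 - Real.sin θ ^ 2) ^ ((1:ℝ)/2-1) = (Real.cos θ)⁻¹ := by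
      rw [← Real.cos_sq', ← Real.rpow_natCast (Real.cos θ) 2, ← Real.rpow_mul hc0.le,
        show ((2:ℕ):ℝ) * ((1:ℝ)/2-1) = -1 by push_cast; ring, Real.rpow_neg_one]
    simp only [e1, e2, smul_eq_mul, abs_of_pos (by positivity :
      (0:ℝ) < 2 * Real.sin θ * Real.cos θ)]
    have e3 : Real.sin θ ^ (α-1) * Real.sin θ = Real.sin θ ^ α := by
      rw [← Real.rpow_add_one hs0.ne' (α-1)]; norm_num
    field_simp
    rw [← e3]
    ring
  rw [MeasureTheory.setIntegral_congr_fun measurableSet_Ioo hcong] at hsub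
  have hbeta := beta_real (v := (1:ℝ)/2) hu (by norm_num)
  rw [intervalIntegral.integral_of_le (by norm_num : (0:ℝ) ≤ 1),
    MeasureTheory.integral_Ioc_eq_integral_Ioo, hsub,
    MeasureTheory.integral_const_mul] at hbeta
  rw [intervalIntegral.integral_of_le (by linarith : (0:ℝ) ≤ π/2),
    MeasureTheory.integral_Ioc_eq_integral_Ioo]
  have hG2 : 0 < Real.Gamma (1 + α/2) := Real.Gamma_pos_of_pos (by linarith)
  have hUV : u + (1:ℝ)/2 = 1 + α/2 := by rw [hu_def]; ring
  rw [hUV, Real.Gamma_one_half_eq] at hbeta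
  rw [show Real.sqrt π / 2 * Real.Gamma ((1+α)/2) / Real.Gamma (1+α/2)
      = (Real.Gamma u * Real.sqrt π) / (2 * Real.Gamma (1+α/2)) by rw [hu_def]; ring,
    eq_div_iff (by positivity)]
  rw [hbeta]; ring


theorem stmt_8 (f : ℝ → ℝ) (hf : ContinuousOn f (Set.Ici 0))
    (a α : ℝ) (ha : a ≠ 0) (hα : -1 < α)
    (hquant : Tendsto (fun x : ℝ => x ^ (-α) * f x) atTop (nhds a)) :
    Tendsto (fun x : ℝ => x ^ (-α) * ∫ θ in (0:ℝ)..(Real.pi/2), f (x * Real.sin θ))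
      atTop
      (nhds (a * ((Real.sqrt Real.pi / 2) *
        Real.Gamma ((1 + α)/2) / Real.Gamma (1 + α/2)))) := by
  have hpi := Real.pi_pos
  -- eventual bound from the limit
  have h1 : ∀ᶠ y in nhds a, |y| ≤ |a| + 1 := by
    filter_upwards [Metric.ball_mem_nhds a zero_lt_one] with y hy
    rw [Metric.mem_ball, Real.dist_eq] at hy
    have := abs_sub_abs_le_abs_sub y a
    linarith
  obtain ⟨y₁, hy₁⟩ := (hquant.eventually h1).exists_forall_of_atTop
  set y₀ : ℝ := max y₁ 1 with hy₀_def
  have hy₀1 : (1:ℝ) ≤ y₀ := le_max_right _ _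
  have hy₀0 : (0:ℝ) < y₀ := lt_of_lt_of_le zero_lt_one hy₀1
  have hy₀ : ∀ y ≥ y₀, |y ^ (-α) * f y| ≤ |a| + 1 := fun y hy =>
    hy₁ y (le_trans (le_max_left _ _) hy)
  -- bound on the compact part
  obtain ⟨M, hM⟩ := isCompact_Icc.exists_bound_of_continuousOn
    (hf.mono (Set.Icc_subset_Ici_self : Set.Icc (0:ℝ) y₀ ⊆ Set.Ici 0))
  set C : ℝ := max M 0 with hC_def
  have hC0 : 0 ≤ C := le_max_right _ _
  have hMC : ∀ y ∈ Set.Icc (0:ℝ) y₀, |f y| ≤ C := fun y hy =>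
    le_trans (hM y hy) (le_max_left _ _)
  set D : ℝ := (|a| + 1) + C * y₀ ^ (-α) with hD_def
  have hD1 : |a| + 1 ≤ D := by
    have : 0 ≤ C * y₀ ^ (-α) := by positivity
    rw [hD_def]; linarith
  have hD2 : C * y₀ ^ (-α) ≤ D := by
    have : 0 ≤ |a| + 1 := by positivity
    rw [hD_def]; linarith
  have hD0 : 0 ≤ D := le_trans (by positivity) hD1
  -- dominated convergence
  have key := MeasureTheory.tendsto_integral_filter_of_dominated_convergence
    (μ := volume.restrict (Set.Ioc 0 (π/2)))
    (F := fun (x : ℝ) (θ : ℝ) => x ^ (-α) * f (x * Real.sin θ))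
    (f := fun θ : ℝ => a * Real.sin θ ^ α)
    (bound := fun θ : ℝ => C + D * Real.sin θ ^ α)
    (l := atTop) ?_ ?_ ?_ ?_
  · -- assemble the conclusion
    have hval : ∫ θ in Set.Ioc (0:ℝ) (π/2), a * Real.sin θ ^ α
        = a * ((Real.sqrt π / 2) * Real.Gamma ((1 + α)/2) / Real.Gamma (1 + α/2)) := by
      rw [MeasureTheory.integral_const_mul, ← intervalIntegral.integral_of_le (by linarith),
        sin_rpow_integral hα]
    rw [hval] at key
    refine key.congr (fun x => ?_)
    rw [intervalIntegral.integral_of_le (by linarith : (0:ℝ) ≤ π/2),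
      MeasureTheory.integral_const_mul]
  · -- measurability
    filter_upwards [eventually_ge_atTop (0:ℝ)] with x hx
    refine ContinuousOn.aestronglyMeasurable ?_ measurableSet_Ioc
    refine (continuousOn_const.mul (hf.comp ?_ ?_))
    · exact (continuous_const.mul Real.continuous_sin).continuousOn
    · intro θ hθ
      exact mul_nonneg hx (Real.sin_nonneg_of_nonneg_of_le_pi hθ.1.le (by linarith [hθ.2]))
  · -- domination
    filter_upwards [eventually_ge_atTop y₀] with x hx
    filter_upwards [MeasureTheory.ae_restrict_mem measurableSet_Ioc] with θ hθ
    have hx1 : (1:ℝ) ≤ x := le_trans hy₀1 hx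
    have hx0 : (0:ℝ) < x := lt_of_lt_of_le zero_lt_one hx1
    have hs0 : 0 < Real.sin θ :=
      Real.sin_pos_of_pos_of_lt_pi hθ.1 (lt_of_le_of_lt hθ.2 (by linarith))
    have hsα : (0:ℝ) ≤ Real.sin θ ^ α := Real.rpow_nonneg hs0.le α
    have hxa : (0:ℝ) < x ^ (-α) := Real.rpow_pos_of_pos hx0 _
    rw [Real.norm_eq_abs, abs_mul, abs_of_pos hxa]
    set y : ℝ := x * Real.sin θ with hy_def
    have hy0 : 0 < y := mul_pos hx0 hs0
    have hxinv : x ^ (-α) * x ^ α = 1 := by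
      rw [← Real.rpow_add hx0]; simp
    rcases le_or_gt y₀ y with hcase | hcase
    · -- tail regime
      have h2 := hy₀ y hcase
      rw [abs_mul, abs_of_pos (Real.rpow_pos_of_pos hy0 _)] at h2
      have h3 : |f y| ≤ (|a| + 1) * y ^ α := by
        have h4 : y ^ (-α) * y ^ α = 1 := by rw [← Real.rpow_add hy0]; simp
        have h5 : 0 < y ^ α := Real.rpow_pos_of_pos hy0 _
        nlinarith [Real.rpow_pos_of_pos hy0 (-α)]
      have h6 : x ^ (-α) * y ^ α = Real.sin θ ^ α := by
        rw [hy_def, Real.mul_rpow hx0.le hs0.le, ← mul_assoc, hxinv, one_mul]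
      calc x ^ (-α) * |f y| ≤ x ^ (-α) * ((|a| + 1) * y ^ α) := by
            exact mul_le_mul_of_nonneg_left h3 hxa.le
        _ = (|a| + 1) * (x ^ (-α) * y ^ α) := by ring
        _ = (|a| + 1) * Real.sin θ ^ α := by rw [h6]
        _ ≤ C + D * Real.sin θ ^ α := by nlinarith
    · -- compact regime
      have hfy : |f y| ≤ C := hMC y ⟨hy0.le, hcase.le⟩
      rcases le_or_gt 0 α with h0 | h0
      · have h7 : x ^ (-α) ≤ 1 :=
          Real.rpow_le_one_of_one_le_of_nonpos hx1 (by linarith)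
        calc x ^ (-α) * |f y| ≤ 1 * C := by
              exact mul_le_mul h7 hfy (abs_nonneg _) zero_le_one
          _ ≤ C + D * Real.sin θ ^ α := by nlinarith
      · have hxlt : x < y₀ / Real.sin θ := by
          rw [lt_div_iff₀ hs0]; exact hcase
        have h8 : x ^ (-α) ≤ (y₀ / Real.sin θ) ^ (-α) :=
          Real.rpow_le_rpow hx0.le hxlt.le (by linarith)
        have h9 : (y₀ / Real.sin θ) ^ (-α) = y₀ ^ (-α) * Real.sin θ ^ α := by
          rw [Real.div_rpow hy₀0.le hs0.le, Real.rpow_neg hs0.le]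
          field_simp
        have hA : x ^ (-α) * |f y| ≤ (y₀ ^ (-α) * Real.sin θ ^ α) * C :=
          mul_le_mul (h8.trans_eq h9) hfy (abs_nonneg _) (by positivity)
        nlinarith [hD2, hsα, hC0]
  · -- integrability of the bound
    exact (MeasureTheory.integrable_const C).add
      ((sin_rpow_integrable hα).const_mul D)
  · -- pointwise limit
    filter_upwards [MeasureTheory.ae_restrict_mem measurableSet_Ioc] with θ hθ
    have hs0 : 0 < Real.sin θ :=
      Real.sin_pos_of_pos_of_lt_pi hθ.1 (lt_of_le_of_lt hθ.2 (by linarith))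
    have h1 : Tendsto (fun x : ℝ => x * Real.sin θ) atTop atTop :=
      Tendsto.atTop_mul_const hs0 tendsto_id
    have h2 := (hquant.comp h1).mul_const (Real.sin θ ^ α)
    refine h2.congr' ?_
    filter_upwards [eventually_gt_atTop (0:ℝ)] with x hx
    show (x * Real.sin θ) ^ (-α) * f (x * Real.sin θ) * Real.sin θ ^ α
      = x ^ (-α) * f (x * Real.sin θ)
    rw [Real.mul_rpow hx.le hs0.le]
    have : Real.sin θ ^ (-α) * Real.sin θ ^ α = 1 := by
      rw [← Real.rpow_add hs0]; simp
    linear_combination (x ^ (-α) * f (x * Real.sin θ)) * this
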